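/- No rewiring of A_weak is language-equivalent to A_weak; that is, for every deterministic Büchi automaton B such that: (1) the states of B are the 13 states {p_a, p_b, p_c, p'_a, p'_b, p'_c, q_a, q_b, q_c, q'_a, q'_b, q'_c, Y} of A_weak (the good states of A_weak), with initial state any one of them; (2) the non-significant transitions of B are exactly the non-significant transitions of A_weak whose source is one of these 13 states; and (3) every significant transition (p,a,q) of B satisfies L(A_weak, q) = a⁻¹ L(A_weak, p), where a⁻¹L = {w : aw ∈ L} and (A_weak, s) denotes A_weak with initial state s — it holds that L(B) ≠ L_weak. -/

import Mathlib

/-- A (nondeterministic) Büchi/coBüchi automaton: an initial state, a set of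
transitions, and a subset of *significant* transitions. -/
structure BuchiAutomaton (σ : Type) (Q : Type) where
  init : Q
  trans : Set (Q × σ × Q)
  sig : Set (Q × σ × Q)
  sig_sub : sig ⊆ trans

namespace BuchiAutomaton

variable {σ Q : Type}

/-- `ρ` is a run of `A` on the infinite word `w`, starting at the state `p`. -/
def IsRunFrom (A : BuchiAutomaton σ Q) (p : Q) (w : ℕ → σ) (ρ : ℕ → Q) : Prop :=
  ρ 0 = p ∧ ∀ i, (ρ i, w i, ρ (i + 1)) ∈ A.trans

/-- Büchi acceptance: the run contains infinitely many significant transitions. -/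
def BuchiAcc (A : BuchiAutomaton σ Q) (w : ℕ → σ) (ρ : ℕ → Q) : Prop :=
  ∀ N, ∃ i, N ≤ i ∧ (ρ i, w i, ρ (i + 1)) ∈ A.sig

/-- coBüchi acceptance: the run contains finitely many significant transitions. -/
def CoBuchiAcc (A : BuchiAutomaton σ Q) (w : ℕ → σ) (ρ : ℕ → Q) : Prop :=
  ∃ N, ∀ i, N ≤ i → (ρ i, w i, ρ (i + 1)) ∉ A.sig

/-- The language of `A` (as a Büchi automaton), with initial state `p`. -/
def LangFrom (A : BuchiAutomaton σ Q) (p : Q) : Set (ℕ → σ) :=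
  {w | ∃ ρ, A.IsRunFrom p w ρ ∧ A.BuchiAcc w ρ}

/-- The language of `A`, read as a Büchi automaton. -/
def Lang (A : BuchiAutomaton σ Q) : Set (ℕ → σ) :=
  A.LangFrom A.init

/-- The language of `A`, read as a coBüchi automaton. -/
def CoLang (A : BuchiAutomaton σ Q) : Set (ℕ → σ) :=
  {w | ∃ ρ, A.IsRunFrom A.init w ρ ∧ A.CoBuchiAcc w ρ}

/-- `A` is deterministic: at most one outgoing transition per state and letter. -/
def Deterministic (A : BuchiAutomaton σ Q) : Prop :=
  ∀ p a q q', (p, a, q) ∈ A.trans → (p, a, q') ∈ A.trans → q = q'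

/-- `FinRun A l p`: `l` is a finite run of `A` from the initial state, ending in
the state `p` (represented as the chronological list of its transitions). -/
inductive FinRun (A : BuchiAutomaton σ Q) : List (Q × σ × Q) → Q → Prop
  | nil : FinRun A [] A.init
  | snoc {l : List (Q × σ × Q)} {p : Q} {a : σ} {q : Q} :
      FinRun A l p → (p, a, q) ∈ A.trans → FinRun A (l ++ [(p, a, q)]) q

/-- A resolver for `A`: a function from finite runs and letters to transitions,
such that on every finite run from the initial state ending in a state `p` and
every letter `a`, it outputs a transition on `a` with source `p`. -/
structure Resolver (A : BuchiAutomaton σ Q) where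
  res : List (Q × σ × Q) → σ → Q × σ × Q
  res_valid : ∀ l p a, A.FinRun l p →
    (res l a).1 = p ∧ (res l a).2.1 = a ∧ res l a ∈ A.trans

/-- The history (finite run) built by a resolver after reading `n` letters of `w`. -/
def Resolver.hist {A : BuchiAutomaton σ Q} (r : Resolver A) (w : ℕ → σ) : ℕ → List (Q × σ × Q)
  | 0 => []
  | n + 1 => r.hist w n ++ [r.res (r.hist w n) (w n)]

/-- The run induced by the resolver on `w` satisfies the Büchi condition. -/
def Resolver.InducedBuchiAcc {A : BuchiAutomaton σ Q} (r : Resolver A) (w : ℕ → σ) : Prop :=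
  ∀ N, ∃ n, N ≤ n ∧ r.res (r.hist w n) (w n) ∈ A.sig

/-- The run induced by the resolver on `w` satisfies the coBüchi condition. -/
def Resolver.InducedCoBuchiAcc {A : BuchiAutomaton σ Q} (r : Resolver A) (w : ℕ → σ) : Prop :=
  ∃ N, ∀ n, N ≤ n → r.res (r.hist w n) (w n) ∉ A.sig

/-- `A` is history-deterministic (as a Büchi automaton). -/
def HistoryDeterministic (A : BuchiAutomaton σ Q) : Prop :=
  ∃ r : Resolver A, ∀ w ∈ A.Lang, r.InducedBuchiAcc w

/-- `A` is history-deterministic (as a coBüchi automaton). -/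
def CoHistoryDeterministic (A : BuchiAutomaton σ Q) : Prop :=
  ∃ r : Resolver A, ∀ w ∈ A.CoLang, r.InducedCoBuchiAcc w

end BuchiAutomaton

/-- The finite factor `w[m..n)` of the infinite word `w`, as a list. -/
def wordSegment {σ : Type} (w : ℕ → σ) (m n : ℕ) : List σ :=
  (List.range (n - m)).map fun i => w (m + i)

/-- `omegaPow X`: the infinite words that can be written as an infinite
concatenation of finite words, each belonging to `X`. -/
def omegaPow {σ : Type} (X : Set (List σ)) : Set (ℕ → σ) :=
  {w | ∃ φ : ℕ → ℕ, φ 0 = 0 ∧ StrictMono φ ∧ ∀ k, wordSegment w (φ k) (φ (k + 1)) ∈ X}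

/-- The index set `{a, b, c}`. -/
inductive ABC : Type
  | a | b | c
deriving DecidableEq

instance instFintypeABC : Fintype ABC :=
  Fintype.ofList [ABC.a, ABC.b, ABC.c] (fun x => by cases x <;> simp)

/-- The alphabet `Σ' = {a, b, c, x, y, r_a, r_b, r_c}`. -/
inductive Sig8 : Type
  | la | lb | lc | lx | ly
  | lr (α : ABC)
deriving DecidableEq, Fintype

/-- The letter associated with an index in `{a, b, c}`. -/
def ABC.tolet : ABC → Sig8
  | .a => .la
  | .b => .lb
  | .c => .lc

/-- Finite words over `{x, y}` (the language `(x^*y^*)^*`). -/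
def XYword : Set (List Sig8) := {u | ∀ l ∈ u, l = Sig8.lx ∨ l = Sig8.ly}

/-- The language `L_α = (x^*y^*)^* x α` of finite words (over `{x,y,a,b,c}`). -/
def Lfin (α : ABC) : Set (List Sig8) :=
  {w | ∃ u ∈ XYword, w = u ++ [Sig8.lx, α.tolet]}

/-- Finite words over `{x, a, b, c, y}`, i.e. containing no reset letter. -/
def NoReset : Set (List Sig8) := {u | ∀ l ∈ u, ∀ α : ABC, l ≠ Sig8.lr α}

/-- `L_weak = ((x+a+b+c+y)^* ⋃_{α≠β} (L_α ∪ {r_α}) L_β L_β Σ'^* y)^ω`. -/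
def LWeak : Set (ℕ → Sig8) :=
  omegaPow {w | ∃ α β : ABC, α ≠ β ∧ ∃ u v₁ v₂ v₃ z : List Sig8,
    u ∈ NoReset ∧ (v₁ ∈ Lfin α ∨ v₁ = [Sig8.lr α]) ∧ v₂ ∈ Lfin β ∧ v₃ ∈ Lfin β ∧
    w = u ++ v₁ ++ v₂ ++ v₃ ++ z ++ [Sig8.ly]}

/-- The 17 states of the automaton `A_weak`. -/
inductive St17 : Type
  | I
  | io (α : ABC)
  | p (α : ABC)
  | p' (α : ABC)
  | q (α : ABC)
  | q' (α : ABC)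
  | Y
deriving DecidableEq

open Sig8 in
/-- The significant transitions of `A_weak`. -/
def weakSig : Set (St17 × Sig8 × St17) :=
  {t | (∃ α : ABC, t = (.I, lr α, .p α)) ∨
       (∃ α : ABC, t = (.io α, α.tolet, .p α)) ∨
       (∃ α γ : ABC, t = (.io α, lr γ, .p γ)) ∨
       (∃ α : ABC, t = (.q' α, α.tolet, .Y)) ∨
       t = (.Y, ly, .I)}

open Sig8 in
/-- The non-significant transitions of `A_weak`. -/
def weakNonsig : Set (St17 × Sig8 × St17) :=
  {t | (∃ l ∈ [ly, la, lb, lc], t = (.I, l, .I)) ∨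
       (∃ α : ABC, t = (.I, lx, .io α)) ∨
       (∃ α : ABC, t = (.io α, lx, .io α)) ∨
       (∃ α β : ABC, α ≠ β ∧ t = (.io α, β.tolet, .I)) ∨
       (∃ α : ABC, t = (.io α, ly, .I)) ∨
       (∃ α : ABC, ∃ l ∈ [ly, la, lb, lc], t = (.p α, l, .p α)) ∨
       (∃ α : ABC, t = (.p α, lx, .p' α)) ∨
       (∃ α γ : ABC, t = (.p α, lr γ, .p γ)) ∨
       (∃ α : ABC, t = (.p' α, lx, .p' α)) ∨
       (∃ α : ABC, t = (.p' α, α.tolet, .p α)) ∨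
       (∃ α : ABC, t = (.p' α, ly, .p α)) ∨
       (∃ α β : ABC, α ≠ β ∧ t = (.p' α, β.tolet, .q β)) ∨
       (∃ α γ : ABC, t = (.p' α, lr γ, .p γ)) ∨
       (∃ α : ABC, ∃ l ∈ [ly, la, lb, lc], t = (.q α, l, .q α)) ∨
       (∃ α : ABC, t = (.q α, lx, .q' α)) ∨
       (∃ α γ : ABC, t = (.q α, lr γ, .p γ)) ∨
       (∃ α : ABC, t = (.q' α, lx, .q' α)) ∨
       (∃ α : ABC, t = (.q' α, ly, .q α)) ∨
       (∃ α β : ABC, α ≠ β ∧ t = (.q' α, β.tolet, .q β)) ∨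
       (∃ α γ : ABC, t = (.q' α, lr γ, .p γ)) ∨
       (∃ l ∈ [lx, la, lb, lc], t = (.Y, l, .Y)) ∨
       (∃ γ : ABC, t = (.Y, lr γ, .Y))}

/-- The Büchi automaton `A_weak`. -/
def Aweak : BuchiAutomaton Sig8 St17 where
  init := .I
  trans := weakSig ∪ weakNonsig
  sig := weakSig
  sig_sub := Set.subset_union_left

/-- The 13 good states of `A_weak`:
`{p_a, p_b, p_c, p'_a, p'_b, p'_c, q_a, q_b, q_c, q'_a, q'_b, q'_c, Y}`. -/
def weakGood : Set St17 :=
  {s | (∃ α : ABC, s = .p α ∨ s = .p' α ∨ s = .q α ∨ s = .q' α) ∨ s = .Y}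

/-- The word `a · w`. -/
def consW {σ : Type} (a : σ) (w : ℕ → σ) : ℕ → σ
  | 0 => a
  | n + 1 => w n

/-! ### Auxiliary material for the proof of `no_rewiring_of_Aweak` -/

set_option synthInstance.maxSize 4000 in
set_option synthInstance.maxHeartbeats 1000000 in
set_option maxRecDepth 8000 in
instance instWNS (t : St17 × Sig8 × St17) : Decidable (t ∈ weakNonsig) := by
  unfold weakNonsig; simp only [Set.mem_setOf_eq]; infer_instance

instance instWS (t : St17 × Sig8 × St17) : Decidable (t ∈ weakSig) := by
  unfold weakSig; simp only [Set.mem_setOf_eq]; infer_instance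

instance instWG (s : St17) : Decidable (s ∈ weakGood) := by
  unfold weakGood; simp only [Set.mem_setOf_eq]; infer_instance

instance instAT (t : St17 × Sig8 × St17) : Decidable (t ∈ Aweak.trans) :=
  inferInstanceAs (Decidable (t ∈ weakSig ∨ t ∈ weakNonsig))

instance instAS (t : St17 × Sig8 × St17) : Decidable (t ∈ Aweak.sig) :=
  inferInstanceAs (Decidable (t ∈ weakSig))

/-- The set of forced (non-significant) transitions of any rewiring `B`. -/
def NSet : Set (St17 × Sig8 × St17) :=
  {t | t ∈ Aweak.trans ∧ t ∉ Aweak.sig ∧ t.1 ∈ weakGood}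

instance instNS (t : St17 × Sig8 × St17) : Decidable (t ∈ NSet) :=
  inferInstanceAs (Decidable (t ∈ Aweak.trans ∧ t ∉ Aweak.sig ∧ t.1 ∈ weakGood))

/-- Letters of the period of the good word `Vg = (r_a x c x c y)^ω`. -/
def per6 : ℕ → Sig8 := fun r =>
  match r with
  | 0 => .lr .a | 1 => .lx | 2 => .lc | 3 => .lx | 4 => .lc | _ => .ly

/-- The good word `(r_a x c x c y)^ω ∈ LWeak`. -/
def Vg : ℕ → Sig8 := fun n => per6 (n % 6)

/-- Letters of the period of the bad word `Wb = (r_c x a x c x c y)^ω`. -/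
def per8w : ℕ → Sig8 := fun r =>
  match r with
  | 0 => .lr .c | 1 => .lx | 2 => .la | 3 => .lx | 4 => .lc | 5 => .lx | 6 => .lc | _ => .ly

/-- The bad word `(r_c x a x c x c y)^ω ∉ LWeak`. -/
def Wb : ℕ → Sig8 := fun n => per8w (n % 8)

lemma seg_Vg (k : ℕ) :
    wordSegment Vg (6*k) (6*(k+1)) = [.lr .a, .lx, .lc, .lx, .lc, .ly] := by
  have h6 : 6*(k+1) - 6*k = 6 := by omega
  rw [wordSegment, h6]
  have hr : List.range 6 = [0,1,2,3,4,5] := by decide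
  rw [hr]
  have e : ∀ j, j < 6 → Vg (6*k+j) = per6 j := by
    intro j hj
    show per6 ((6*k+j) % 6) = per6 j
    congr 1
    omega
  simp only [List.map_cons, List.map_nil]
  rw [e 0 (by norm_num), e 1 (by norm_num), e 2 (by norm_num), e 3 (by norm_num),
      e 4 (by norm_num), e 5 (by norm_num)]
  rfl

lemma Vg_mem : Vg ∈ LWeak := by
  refine ⟨fun k => 6*k, rfl, ?_, ?_⟩
  · intro a b hab
    simp only
    omega
  · intro k
    rw [seg_Vg]
    refine ⟨ABC.a, ABC.c, by decide, [], [.lr .a], [.lx, .lc], [.lx, .lc], [], ?_, Or.inr rfl,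
      ⟨[], ?_, rfl⟩, ⟨[], ?_, rfl⟩, rfl⟩
    · intro l hl; cases hl
    · intro l hl; cases hl
    · intro l hl; cases hl

lemma peel {w : ℕ → Sig8} {s n : ℕ} {a : Sig8} {rest : List Sig8}
    (h : (List.range' s n).map w = a :: rest) :
    w s = a ∧ (List.range' (s+1) (n-1)).map w = rest := by
  cases n with
  | zero => simp at h
  | succ m =>
    have h' : w s :: (List.range' (s+1) m).map w = a :: rest := h
    injection h' with h1 h2
    exact ⟨h1, h2⟩

lemma split {w : ℕ → Sig8} :
    ∀ (l1 : List Sig8) {s n : ℕ} {l2 : List Sig8},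
      (List.range' s n).map w = l1 ++ l2 →
      (List.range' s l1.length).map w = l1 ∧
        (List.range' (s + l1.length) (n - l1.length)).map w = l2
  | [], s, n, l2, h => ⟨rfl, by simpa using h⟩
  | a :: t, s, n, l2, h => by
    obtain ⟨h1, h2⟩ := peel (by simpa using h)
    obtain ⟨h3, h4⟩ := split t h2
    constructor
    · show w s :: (List.range' (s+1) t.length).map w = a :: t
      rw [h1, h3]
    · have e1 : s + (a :: t).length = s + 1 + t.length := by
        rw [List.length_cons]; omega
      have e2 : n - (a :: t).length = n - 1 - t.length := by
        rw [List.length_cons]; omega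
      rw [e1, e2]
      exact h4

lemma Wb_not : Wb ∉ LWeak := by
  rintro ⟨φ, hφ0, -, hblk⟩
  obtain ⟨α, β, hαβ, u, v₁, v₂, v₃, z, hu, hv₁, hv₂, hv₃, heq⟩ := hblk 0
  rw [hφ0] at heq
  have hseg : wordSegment Wb 0 (φ 1) = (List.range' 0 (φ 1)).map Wb := by
    unfold wordSegment
    rw [Nat.sub_zero, List.range_eq_range']
    have : (fun i => Wb (0 + i)) = Wb := by funext i; rw [Nat.zero_add]
    rw [this]
  rw [hseg] at heq
  have heq' : (List.range' 0 (φ 1)).map Wb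
      = u ++ (v₁ ++ (v₂ ++ (v₃ ++ (z ++ [Sig8.ly])))) := by
    simpa only [List.append_assoc] using heq
  obtain ⟨huEq, h2⟩ := split u heq'
  have hu0 : u = [] := by
    cases u with
    | nil => rfl
    | cons a t =>
      obtain ⟨h1, -⟩ := peel huEq
      have ha : a = Sig8.lr ABC.c := by rw [← h1]; rfl
      exact absurd ha (hu a List.mem_cons_self ABC.c)
  subst hu0
  simp only [List.length_nil, Nat.add_zero, Nat.sub_zero] at h2
  rcases hv₁ with ⟨u₁, hu₁, rfl⟩ | rfl
  · -- v₁ ∈ Lfin α : impossible since the word starts with a reset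
    have h2' : (List.range' 0 (φ 1)).map Wb
        = u₁ ++ ([Sig8.lx, ABC.tolet α] ++ (v₂ ++ (v₃ ++ (z ++ [Sig8.ly])))) := by
      simpa only [List.append_assoc] using h2
    obtain ⟨hA, hB⟩ := split u₁ h2'
    cases u₁ with
    | nil =>
      obtain ⟨hx, -⟩ := peel (by simpa using hB)
      exact absurd hx (by decide)
    | cons a t =>
      obtain ⟨h1, -⟩ := peel hA
      rcases hu₁ a List.mem_cons_self with h | h <;>
        (rw [h] at h1; exact absurd h1 (by decide))
  · -- v₁ = [lr α]
    obtain ⟨-, h3⟩ := peel (by simpa using h2)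
    obtain ⟨u₂, hu₂, rfl⟩ := hv₂
    have h3' : (List.range' 1 (φ 1 - 1)).map Wb
        = u₂ ++ ([Sig8.lx, ABC.tolet β] ++ (v₃ ++ (z ++ [Sig8.ly]))) := by
      simpa only [List.append_assoc] using h3
    obtain ⟨hC, hD⟩ := split u₂ h3'
    have hu₂0 : u₂ = [] := by
      cases u₂ with
      | nil => rfl
      | cons a t =>
        cases t with
        | nil =>
          obtain ⟨hx, -⟩ := peel (by simpa using hD)
          have hx' : Wb 2 = Sig8.lx := by simpa using hx
          exact absurd hx' (by decide)
        | cons b t' =>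
          obtain ⟨-, hC2⟩ := peel (by simpa using hC)
          obtain ⟨h1, -⟩ := peel hC2
          rcases hu₂ b (by simp) with h | h <;>
            (rw [h] at h1; exact absurd h1 (by decide))
    subst hu₂0
    simp only [List.length_nil, Nat.add_zero, Nat.sub_zero] at hD
    obtain ⟨hx1, hD2⟩ := peel (by simpa using hD)
    obtain ⟨hx2, hD3⟩ := peel hD2
    have hβ : β = ABC.a := by
      cases β with
      | a => rfl
      | b => exact absurd hx2 (by decide)
      | c => exact absurd hx2 (by decide)
    subst hβ
    obtain ⟨u₃, hu₃, rfl⟩ := hv₃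
    have hD3' : (List.range' 3 (φ 1 - 1 - 1 - 1)).map Wb
        = u₃ ++ ([Sig8.lx, ABC.tolet ABC.a] ++ (z ++ [Sig8.ly])) := by
      simpa only [List.append_assoc] using hD3
    obtain ⟨hE, hF⟩ := split u₃ hD3'
    obtain ⟨hx3, hF2⟩ := peel (by simpa using hF)
    obtain ⟨hx4, -⟩ := peel hF2
    cases u₃ with
    | nil => exact absurd hx4 (by decide)
    | cons a t =>
      cases t with
      | nil =>
        have hx4' : Wb 5 = ABC.tolet ABC.a := by simpa using hx4
        exact absurd hx4' (by decide)
      | cons b t' =>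
        obtain ⟨-, hE2⟩ := peel (by simpa using hE)
        obtain ⟨h1, -⟩ := peel hE2
        rcases hu₃ b (by simp) with h | h <;>
          (rw [h] at h1; exact absurd h1 (by decide))

/-- The states of the looping part of the accepting runs on `Wb`. -/
def perSt (sc t : St17) : ℕ → St17 := fun r =>
  match r with
  | 0 => t
  | 1 => .p .c | 2 => .p' .c | 3 => .q .a | 4 => .q' .a | 5 => .q .c | 6 => .q' .c
  | _ => sc

lemma runA (B : BuchiAutomaton Sig8 St17) (sc t : St17)
    (h0 : (B.init, Sig8.lr ABC.c, St17.p ABC.c) ∈ B.trans)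
    (h1 : ((St17.p ABC.c), Sig8.lx, (St17.p' ABC.c)) ∈ B.trans)
    (h2 : ((St17.p' ABC.c), Sig8.la, (St17.q ABC.a)) ∈ B.trans)
    (h3 : ((St17.q ABC.a), Sig8.lx, (St17.q' ABC.a)) ∈ B.trans)
    (h4 : ((St17.q' ABC.a), Sig8.lc, (St17.q ABC.c)) ∈ B.trans)
    (h5 : ((St17.q ABC.c), Sig8.lx, (St17.q' ABC.c)) ∈ B.trans)
    (h6 : ((St17.q' ABC.c), Sig8.lc, sc) ∈ B.trans)
    (h6s : ((St17.q' ABC.c), Sig8.lc, sc) ∈ B.sig)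
    (h7 : (sc, Sig8.ly, t) ∈ B.trans)
    (h8 : (t, Sig8.lr ABC.c, St17.p ABC.c) ∈ B.trans) :
    Wb ∈ B.Lang := by
  refine ⟨fun n => if n = 0 then B.init else perSt sc t (n % 8), ⟨rfl, ?_⟩, ?_⟩
  · intro i
    rcases Nat.eq_zero_or_pos i with rfl | hi
    · simp only [if_pos rfl, if_neg (Nat.one_ne_zero)]
      exact h0
    · have hne : i ≠ 0 := by omega
      have hne1 : i + 1 ≠ 0 := by omega
      simp only [if_neg hne, if_neg hne1]
      have hw : Wb i = per8w (i % 8) := rfl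
      have hstep : (i+1) % 8 = (i % 8 + 1) % 8 := by omega
      rw [hw, hstep]
      have : i % 8 = 0 ∨ i % 8 = 1 ∨ i % 8 = 2 ∨ i % 8 = 3 ∨ i % 8 = 4 ∨ i % 8 = 5 ∨
          i % 8 = 6 ∨ i % 8 = 7 := by omega
      rcases this with h|h|h|h|h|h|h|h <;> rw [h]
      exacts [h8, h1, h2, h3, h4, h5, h6, h7]
  · intro N
    refine ⟨8*N + 6, by omega, ?_⟩
    have e0 : 8*N + 6 ≠ 0 := by omega
    have e1 : 8*N + 6 + 1 ≠ 0 := by omega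
    simp only [if_neg e0, if_neg e1]
    have r0 : (8*N + 6) % 8 = 6 := by omega
    have r1 : (8*N + 6 + 1) % 8 = 7 := by omega
    rw [show Wb (8*N+6) = per8w ((8*N+6) % 8) from rfl, r0, r1]
    exact h6s

lemma runB (B : BuchiAutomaton Sig8 St17) (sY sc t : St17) (hI : B.init = St17.Y)
    (hYx : ((St17.Y), Sig8.lx, (St17.Y)) ∈ B.trans)
    (hYa : ((St17.Y), Sig8.la, (St17.Y)) ∈ B.trans)
    (hYc : ((St17.Y), Sig8.lc, (St17.Y)) ∈ B.trans)
    (hYr : ((St17.Y), Sig8.lr ABC.c, (St17.Y)) ∈ B.trans)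
    (hYy : ((St17.Y), Sig8.ly, sY) ∈ B.trans)
    (hsY : (sY, Sig8.lr ABC.c, St17.p ABC.c) ∈ B.trans)
    (h1 : ((St17.p ABC.c), Sig8.lx, (St17.p' ABC.c)) ∈ B.trans)
    (h2 : ((St17.p' ABC.c), Sig8.la, (St17.q ABC.a)) ∈ B.trans)
    (h3 : ((St17.q ABC.a), Sig8.lx, (St17.q' ABC.a)) ∈ B.trans)
    (h4 : ((St17.q' ABC.a), Sig8.lc, (St17.q ABC.c)) ∈ B.trans)
    (h5 : ((St17.q ABC.c), Sig8.lx, (St17.q' ABC.c)) ∈ B.trans)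
    (h6 : ((St17.q' ABC.c), Sig8.lc, sc) ∈ B.trans)
    (h6s : ((St17.q' ABC.c), Sig8.lc, sc) ∈ B.sig)
    (h7 : (sc, Sig8.ly, t) ∈ B.trans)
    (h8 : (t, Sig8.lr ABC.c, St17.p ABC.c) ∈ B.trans) :
    Wb ∈ B.Lang := by
  refine ⟨fun n => if n ≤ 7 then St17.Y else if n = 8 then sY else perSt sc t (n % 8),
    ⟨by simp [hI], ?_⟩, ?_⟩
  · intro i
    rcases (by omega : i ≤ 6 ∨ i = 7 ∨ i = 8 ∨ 9 ≤ i) with h | rfl | rfl | h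
    · have b1 : i ≤ 7 := by omega
      have b2 : i + 1 ≤ 7 := by omega
      simp only [if_pos b1, if_pos b2]
      interval_cases i
      exacts [hYr, hYx, hYa, hYx, hYc, hYx, hYc]
    · simp only [if_pos (by norm_num : (7:ℕ) ≤ 7), if_neg (by norm_num : ¬(7+1 : ℕ) ≤ 7),
        if_pos (by norm_num : (7+1:ℕ) = 8)]
      exact hYy
    · simp only [if_neg (by norm_num : ¬(8:ℕ) ≤ 7), if_pos (by norm_num : (8:ℕ) = 8),
        if_neg (by norm_num : ¬(8+1:ℕ) ≤ 7), if_neg (by norm_num : (8+1:ℕ) ≠ 8)]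
      exact hsY
    · have b1 : ¬ i ≤ 7 := by omega
      have b2 : i ≠ 8 := by omega
      have b3 : ¬ i + 1 ≤ 7 := by omega
      have b4 : i + 1 ≠ 8 := by omega
      simp only [if_neg b1, if_neg b2, if_neg b3, if_neg b4]
      have hw : Wb i = per8w (i % 8) := rfl
      have hstep : (i+1) % 8 = (i % 8 + 1) % 8 := by omega
      rw [hw, hstep]
      have : i % 8 = 0 ∨ i % 8 = 1 ∨ i % 8 = 2 ∨ i % 8 = 3 ∨ i % 8 = 4 ∨ i % 8 = 5 ∨
          i % 8 = 6 ∨ i % 8 = 7 := by omega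
      rcases this with h|h|h|h|h|h|h|h <;> rw [h]
      exacts [h8, h1, h2, h3, h4, h5, h6, h7]
  · intro N
    refine ⟨8*N + 14, by omega, ?_⟩
    have b1 : ¬ 8*N + 14 ≤ 7 := by omega
    have b2 : 8*N + 14 ≠ 8 := by omega
    have b3 : ¬ 8*N + 14 + 1 ≤ 7 := by omega
    have b4 : 8*N + 14 + 1 ≠ 8 := by omega
    simp only [if_neg b1, if_neg b2, if_neg b3, if_neg b4]
    have r0 : (8*N + 14) % 8 = 6 := by omega
    have r1 : (8*N + 14 + 1) % 8 = 7 := by omega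
    rw [show Wb (8*N+14) = per8w ((8*N+14) % 8) from rfl, r0, r1]
    exact h6s

lemma runC (B : BuchiAutomaton Sig8 St17) (hI : B.init = St17.Y)
    (hYx : ((St17.Y), Sig8.lx, (St17.Y)) ∈ B.trans)
    (hYa : ((St17.Y), Sig8.la, (St17.Y)) ∈ B.trans)
    (hYc : ((St17.Y), Sig8.lc, (St17.Y)) ∈ B.trans)
    (hYr : ((St17.Y), Sig8.lr ABC.c, (St17.Y)) ∈ B.trans)
    (hYy : ((St17.Y), Sig8.ly, (St17.Y)) ∈ B.trans)
    (hYys : ((St17.Y), Sig8.ly, (St17.Y)) ∈ B.sig) :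
    Wb ∈ B.Lang := by
  refine ⟨fun _ => St17.Y, ⟨hI.symm, ?_⟩, ?_⟩
  · intro i
    have hw : Wb i = per8w (i % 8) := rfl
    rw [hw]
    have : i % 8 = 0 ∨ i % 8 = 1 ∨ i % 8 = 2 ∨ i % 8 = 3 ∨ i % 8 = 4 ∨ i % 8 = 5 ∨
        i % 8 = 6 ∨ i % 8 = 7 := by omega
    rcases this with h|h|h|h|h|h|h|h <;> rw [h]
    exacts [hYr, hYx, hYa, hYx, hYc, hYx, hYc, hYy]
  · intro N
    refine ⟨8*N + 7, by omega, ?_⟩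
    rw [show Wb (8*N+7) = per8w ((8*N+7) % 8) from rfl, (by omega : (8*N+7) % 8 = 7)]
    exact hYys

lemma runD (B : BuchiAutomaton Sig8 St17)
    (h0 : (B.init, Sig8.lr ABC.c, St17.p ABC.c) ∈ B.trans)
    (h1 : ((St17.p ABC.c), Sig8.lx, (St17.p' ABC.c)) ∈ B.trans)
    (h2 : ((St17.p' ABC.c), Sig8.la, (St17.q ABC.a)) ∈ B.trans)
    (h3 : ((St17.q ABC.a), Sig8.lx, (St17.q' ABC.a)) ∈ B.trans)
    (h4 : ((St17.q' ABC.a), Sig8.lc, (St17.q ABC.c)) ∈ B.trans)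
    (h5 : ((St17.q ABC.c), Sig8.lx, (St17.q' ABC.c)) ∈ B.trans)
    (h6 : ((St17.q' ABC.c), Sig8.lc, (St17.Y)) ∈ B.trans)
    (hYx : ((St17.Y), Sig8.lx, (St17.Y)) ∈ B.trans)
    (hYa : ((St17.Y), Sig8.la, (St17.Y)) ∈ B.trans)
    (hYc : ((St17.Y), Sig8.lc, (St17.Y)) ∈ B.trans)
    (hYr : ((St17.Y), Sig8.lr ABC.c, (St17.Y)) ∈ B.trans)
    (hYy : ((St17.Y), Sig8.ly, (St17.Y)) ∈ B.trans)
    (hYys : ((St17.Y), Sig8.ly, (St17.Y)) ∈ B.sig) :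
    Wb ∈ B.Lang := by
  refine ⟨fun n => if n = 0 then B.init else if n ≤ 6 then perSt St17.Y St17.Y (n % 8)
    else St17.Y, ⟨rfl, ?_⟩, ?_⟩
  · intro i
    rcases (by omega : i = 0 ∨ (1 ≤ i ∧ i ≤ 5) ∨ i = 6 ∨ 7 ≤ i) with rfl | ⟨hl, hr⟩ | rfl | h
    · simp only [if_pos rfl, if_neg Nat.one_ne_zero, if_pos (by norm_num : (1:ℕ) ≤ 6)]
      exact h0
    · have b1 : i ≠ 0 := by omega
      have b2 : i ≤ 6 := by omega
      have b3 : i + 1 ≠ 0 := by omega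
      have b4 : i + 1 ≤ 6 := by omega
      simp only [if_neg b1, if_pos b2, if_neg b3, if_pos b4]
      interval_cases i
      exacts [h1, h2, h3, h4, h5]
    · simp only [if_neg (by norm_num : (6:ℕ) ≠ 0), if_pos (by norm_num : (6:ℕ) ≤ 6),
        if_neg (by norm_num : (6+1:ℕ) ≠ 0), if_neg (by norm_num : ¬(6+1:ℕ) ≤ 6)]
      exact h6
    · have b1 : i ≠ 0 := by omega
      have b2 : ¬ i ≤ 6 := by omega
      have b3 : i + 1 ≠ 0 := by omega
      have b4 : ¬ i + 1 ≤ 6 := by omega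
      simp only [if_neg b1, if_neg b2, if_neg b3, if_neg b4]
      have hw : Wb i = per8w (i % 8) := rfl
      rw [hw]
      have : i % 8 = 0 ∨ i % 8 = 1 ∨ i % 8 = 2 ∨ i % 8 = 3 ∨ i % 8 = 4 ∨ i % 8 = 5 ∨
          i % 8 = 6 ∨ i % 8 = 7 := by omega
      rcases this with h|h|h|h|h|h|h|h <;> rw [h]
      exacts [hYr, hYx, hYa, hYx, hYc, hYx, hYc, hYy]
  · intro N
    refine ⟨8*N + 7, by omega, ?_⟩
    have b1 : 8*N + 7 ≠ 0 := by omega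
    have b2 : ¬ 8*N + 7 ≤ 6 := by omega
    have b3 : 8*N + 7 + 1 ≠ 0 := by omega
    have b4 : ¬ 8*N + 7 + 1 ≤ 6 := by omega
    simp only [if_neg b1, if_neg b2, if_neg b3, if_neg b4]
    rw [show Wb (8*N+7) = per8w ((8*N+7) % 8) from rfl, (by omega : (8*N+7) % 8 = 7)]
    exact hYys

lemma notNS_qcc (s : St17) : ((St17.q' ABC.c), Sig8.lc, s) ∉ NSet := by
  rcases s with _ | α | α | α | α | α
  case I => decide
  case Y => decide
  all_goals cases α <;> decide

lemma notNS_Yy (s : St17) : ((St17.Y), Sig8.ly, s) ∉ NSet := by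
  rcases s with _ | α | α | α | α | α
  case I => decide
  case Y => decide
  all_goals cases α <;> decide

lemma good_cases (s : St17) (h : s ∈ weakGood) (hne : s ≠ St17.Y) :
    (s, Sig8.lr ABC.a, St17.p ABC.a) ∈ NSet ∧ (s, Sig8.lr ABC.c, St17.p ABC.c) ∈ NSet ∧
      ∃ t, t ≠ St17.Y ∧ (s, Sig8.ly, t) ∈ NSet ∧ (t, Sig8.lr ABC.c, St17.p ABC.c) ∈ NSet := by
  rcases h with ⟨α, h | h | h | h⟩ | h
  · subst h
    refine ⟨?_, ?_, St17.p α, ?_, ?_, ?_⟩ <;> cases α <;> decide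
  · subst h
    refine ⟨?_, ?_, St17.p α, ?_, ?_, ?_⟩ <;> cases α <;> decide
  · subst h
    refine ⟨?_, ?_, St17.q α, ?_, ?_, ?_⟩ <;> cases α <;> decide
  · subst h
    refine ⟨?_, ?_, St17.q α, ?_, ?_, ?_⟩ <;> cases α <;> decide
  · exact absurd h hne

/-- No rewiring of `A_weak` is language-equivalent to `A_weak`:
for every deterministic Büchi automaton `B` whose states are the 13 good states
of `A_weak` (with any of them as initial state), whose non-significant
transitions are exactly the non-significant transitions of `A_weak` with source
among these states, and whose significant transitions `(p, a, q)` go between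
good states and satisfy `L(A_weak, q) = a⁻¹ L(A_weak, p)`, we have
`L(B) ≠ L_weak`. -/
theorem no_rewiring_of_Aweak (B : BuchiAutomaton Sig8 St17)
    (hinit : B.init ∈ weakGood)
    (hnonsig : B.trans \ B.sig =
      {t | t ∈ Aweak.trans ∧ t ∉ Aweak.sig ∧ t.1 ∈ weakGood})
    (hsig : ∀ t ∈ B.sig, t.1 ∈ weakGood ∧ t.2.2 ∈ weakGood ∧
      Aweak.LangFrom t.2.2 = {w | consW t.2.1 w ∈ Aweak.LangFrom t.1})
    (hdet : B.Deterministic) :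
    B.Lang ≠ LWeak := by
  intro hL
  have hNSsub : ∀ {x : St17 × Sig8 × St17}, x ∈ NSet → x ∈ B.trans := by
    intro x hx
    have hx' : x ∈ B.trans \ B.sig := by rw [hnonsig]; exact hx
    exact hx'.1
  have forced : ∀ p l q q', (p, l, q) ∈ NSet → (p, l, q') ∈ B.trans → q' = q :=
    fun p l q q' hN hT => hdet p l q' q hT (hNSsub hN)
  have sig_of_qc : ∀ s, ((St17.q' ABC.c), Sig8.lc, s) ∈ B.trans →
      ((St17.q' ABC.c), Sig8.lc, s) ∈ B.sig := by
    intro s h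
    by_contra hc
    have hx : ((St17.q' ABC.c), Sig8.lc, s) ∈ B.trans \ B.sig := ⟨h, hc⟩
    rw [hnonsig] at hx
    exact notNS_qcc s hx
  have sig_of_Yy : ∀ s, ((St17.Y), Sig8.ly, s) ∈ B.trans →
      ((St17.Y), Sig8.ly, s) ∈ B.sig := by
    intro s h
    by_contra hc
    have hx : ((St17.Y), Sig8.ly, s) ∈ B.trans \ B.sig := ⟨h, hc⟩
    rw [hnonsig] at hx
    exact notNS_Yy s hx
  have contra : Wb ∈ B.Lang → False := by
    intro h
    rw [hL] at h
    exact Wb_not h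
  have hVB : Vg ∈ B.Lang := by rw [hL]; exact Vg_mem
  obtain ⟨ρ, ⟨hρ0, hst⟩, -⟩ := hVB
  by_cases hIY : B.init = St17.Y
  · -- the initial state is Y
    have s0 := hst 0; rw [hρ0, hIY] at s0
    have e1 : ρ 1 = St17.Y :=
      forced _ _ _ _ (by decide : ((St17.Y), Sig8.lr ABC.a, (St17.Y)) ∈ NSet) s0
    have s1 := hst 1; rw [e1] at s1
    have e2 : ρ 2 = St17.Y :=
      forced _ _ _ _ (by decide : ((St17.Y), Sig8.lx, (St17.Y)) ∈ NSet) s1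
    have s2 := hst 2; rw [e2] at s2
    have e3 : ρ 3 = St17.Y :=
      forced _ _ _ _ (by decide : ((St17.Y), Sig8.lc, (St17.Y)) ∈ NSet) s2
    have s3 := hst 3; rw [e3] at s3
    have e4 : ρ 4 = St17.Y :=
      forced _ _ _ _ (by decide : ((St17.Y), Sig8.lx, (St17.Y)) ∈ NSet) s3
    have s4 := hst 4; rw [e4] at s4
    have e5 : ρ 5 = St17.Y :=
      forced _ _ _ _ (by decide : ((St17.Y), Sig8.lc, (St17.Y)) ∈ NSet) s4
    have s5 := hst 5; rw [e5] at s5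
    -- s5 : (Y, ly, ρ 6) ∈ B.trans
    have hSYsig := sig_of_Yy (ρ 6) s5
    have hSYgood : ρ 6 ∈ weakGood := (hsig _ hSYsig).2.1
    by_cases h6Y : ρ 6 = St17.Y
    · rw [h6Y] at s5 hSYsig
      exact contra (runC B hIY (hNSsub (by decide)) (hNSsub (by decide))
        (hNSsub (by decide)) (hNSsub (by decide)) s5 hSYsig)
    · obtain ⟨hra, hrc, t6, ht6Y, hy6, hrc6⟩ := good_cases (ρ 6) hSYgood h6Y
      have s6 := hst 6
      have e7 : ρ 7 = St17.p ABC.a := forced _ _ _ _ hra s6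
      have s7 := hst 7; rw [e7] at s7
      have e8 : ρ 8 = St17.p' ABC.a :=
        forced _ _ _ _ (by decide : ((St17.p ABC.a), Sig8.lx, (St17.p' ABC.a)) ∈ NSet) s7
      have s8 := hst 8; rw [e8] at s8
      have e9 : ρ 9 = St17.q ABC.c :=
        forced _ _ _ _ (by decide : ((St17.p' ABC.a), Sig8.lc, (St17.q ABC.c)) ∈ NSet) s8
      have s9 := hst 9; rw [e9] at s9
      have e10 : ρ 10 = St17.q' ABC.c :=
        forced _ _ _ _ (by decide : ((St17.q ABC.c), Sig8.lx, (St17.q' ABC.c)) ∈ NSet) s9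
      have s10 := hst 10; rw [e10] at s10
      -- s10 : (q'_c, lc, ρ 11) ∈ B.trans
      have hScsig := sig_of_qc (ρ 11) s10
      have hScgood : ρ 11 ∈ weakGood := (hsig _ hScsig).2.1
      by_cases h11Y : ρ 11 = St17.Y
      · rw [h11Y] at s10 hScsig
        exact contra (runB B (ρ 6) St17.Y (ρ 6) hIY (hNSsub (by decide)) (hNSsub (by decide))
          (hNSsub (by decide)) (hNSsub (by decide)) s5 (hNSsub hrc)
          (hNSsub (by decide)) (hNSsub (by decide)) (hNSsub (by decide))
          (hNSsub (by decide)) (hNSsub (by decide)) s10 hScsig s5 (hNSsub hrc))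
      · obtain ⟨-, -, t11, ht11Y, hy11, hrc11⟩ := good_cases (ρ 11) hScgood h11Y
        exact contra (runB B (ρ 6) (ρ 11) t11 hIY (hNSsub (by decide)) (hNSsub (by decide))
          (hNSsub (by decide)) (hNSsub (by decide)) s5 (hNSsub hrc)
          (hNSsub (by decide)) (hNSsub (by decide)) (hNSsub (by decide))
          (hNSsub (by decide)) (hNSsub (by decide)) s10 hScsig (hNSsub hy11) (hNSsub hrc11))
  · -- the initial state is a good state different from Y
    obtain ⟨hra, hrc, -⟩ := good_cases B.init hinit hIY
    have s0 := hst 0; rw [hρ0] at s0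
    have e1 : ρ 1 = St17.p ABC.a := forced _ _ _ _ hra s0
    have s1 := hst 1; rw [e1] at s1
    have e2 : ρ 2 = St17.p' ABC.a :=
      forced _ _ _ _ (by decide : ((St17.p ABC.a), Sig8.lx, (St17.p' ABC.a)) ∈ NSet) s1
    have s2 := hst 2; rw [e2] at s2
    have e3 : ρ 3 = St17.q ABC.c :=
      forced _ _ _ _ (by decide : ((St17.p' ABC.a), Sig8.lc, (St17.q ABC.c)) ∈ NSet) s2
    have s3 := hst 3; rw [e3] at s3
    have e4 : ρ 4 = St17.q' ABC.c :=
      forced _ _ _ _ (by decide : ((St17.q ABC.c), Sig8.lx, (St17.q' ABC.c)) ∈ NSet) s3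
    have s4 := hst 4; rw [e4] at s4
    -- s4 : (q'_c, lc, ρ 5) ∈ B.trans
    have hScsig := sig_of_qc (ρ 5) s4
    have hScgood : ρ 5 ∈ weakGood := (hsig _ hScsig).2.1
    by_cases h5Y : ρ 5 = St17.Y
    · have s5 := hst 5; rw [h5Y] at s4 s5 hScsig
      -- s5 : (Y, ly, ρ 6) ∈ B.trans
      have hSYsig := sig_of_Yy (ρ 6) s5
      have hSYgood : ρ 6 ∈ weakGood := (hsig _ hSYsig).2.1
      by_cases h6Y : ρ 6 = St17.Y
      · rw [h6Y] at s5 hSYsig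
        exact contra (runD B (hNSsub hrc) (hNSsub (by decide)) (hNSsub (by decide))
          (hNSsub (by decide)) (hNSsub (by decide)) (hNSsub (by decide)) s4
          (hNSsub (by decide)) (hNSsub (by decide)) (hNSsub (by decide))
          (hNSsub (by decide)) s5 hSYsig)
      · obtain ⟨-, hrcY6, t6, ht6Y, hy6, hrc6⟩ := good_cases (ρ 6) hSYgood h6Y
        exact contra (runA B St17.Y (ρ 6) (hNSsub hrc) (hNSsub (by decide))
          (hNSsub (by decide)) (hNSsub (by decide)) (hNSsub (by decide))
          (hNSsub (by decide)) s4 hScsig s5 (hNSsub hrcY6))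
    · obtain ⟨-, -, t5, ht5Y, hy5, hrc5⟩ := good_cases (ρ 5) hScgood h5Y
      exact contra (runA B (ρ 5) t5 (hNSsub hrc) (hNSsub (by decide))
        (hNSsub (by decide)) (hNSsub (by decide)) (hNSsub (by decide))
        (hNSsub (by decide)) s4 hScsig (hNSsub hy5) (hNSsub hrc5))
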